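/- Let A be a finite set of players, γ : 2^A → {0, 1} a function, and define the dual game γ^d : 2^A → {0, 1} by γ^d(C) = 1 − γ(A \ C). Then for every player a ∈ A, the Shapley values coincide: Φ_{γ^d}(a) = Φ_γ(a). (This underlies the fact that forward responsibility is the same for a safety property and its dual reachability property.) -/
import Mathlib


open Finset

/-- The Shapley value of player `a` in the cooperative game `γ` on the
player set `ι`:
`Φ_γ(a) = Σ_{C ⊆ A \ {a}} ((|A| − |C| − 1)! · |C|! / |A|!) · (γ(C ∪ {a}) − γ(C))`. -/
noncomputable def shapley {ι : Type*} [Fintype ι] [DecidableEq ι]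
    (γ : Finset ι → ℝ) (a : ι) : ℝ :=
  ∑ C ∈ (Finset.univ.erase a).powerset,
    ((Nat.factorial (Fintype.card ι - C.card - 1) * Nat.factorial C.card : ℝ) /
        (Nat.factorial (Fintype.card ι) : ℝ)) *
      (γ (insert a C) - γ C)

/-- **Self-duality of the Shapley value.** For any `{0,1}`-valued game `γ` and
its dual game `γᵈ(C) = 1 − γ(A \ C)`, every player has the same Shapley value
in `γᵈ` as in `γ`. (This underlies the fact that forward responsibility is the
same for a safety property and its dual reachability property.) -/
theorem shapley_dual {ι : Type*} [Fintype ι] [DecidableEq ι]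
    (γ : Finset ι → ℝ) (h01 : ∀ C, γ C = 0 ∨ γ C = 1) (a : ι) :
    shapley (fun C => 1 - γ (Finset.univ \ C)) a = shapley γ a := by
  classical
  unfold shapley
  have ha : a ∈ (Finset.univ : Finset ι) := mem_univ a
  have hcard : (Finset.univ.erase a).card = Fintype.card ι - 1 := by
    rw [card_erase_of_mem ha, card_univ]
  refine Finset.sum_nbij' (i := fun C => (Finset.univ.erase a) \ C)
    (j := fun C => (Finset.univ.erase a) \ C) ?_ ?_ ?_ ?_ ?_
  · intro C hC
    simp [Finset.mem_powerset]
  · intro C hC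
    simp [Finset.mem_powerset]
  · intro C hC
    rw [Finset.mem_powerset] at hC
    exact Finset.sdiff_sdiff_eq_self hC
  · intro C hC
    rw [Finset.mem_powerset] at hC
    exact Finset.sdiff_sdiff_eq_self hC
  · intro C hC
    rw [Finset.mem_powerset] at hC
    have haC : a ∉ C := fun h => (Finset.mem_erase.mp (hC h)).1 rfl
    have hDcard : ((Finset.univ.erase a) \ C).card = Fintype.card ι - 1 - C.card := by
      rw [Finset.card_sdiff_of_subset hC, hcard]
    have hCle : C.card ≤ Fintype.card ι - 1 := hcard ▸ Finset.card_le_card hC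
    have hn : 1 ≤ Fintype.card ι := Fintype.card_pos_iff.mpr ⟨a⟩
    have h1 : Finset.univ \ C = insert a ((Finset.univ.erase a) \ C) := by
      ext x
      by_cases hx : x = a <;> simp [hx, haC, Finset.mem_sdiff, Finset.mem_erase]
    have h2 : Finset.univ \ insert a C = (Finset.univ.erase a) \ C := by
      ext x
      by_cases hx : x = a <;>
        simp [hx, haC, Finset.mem_sdiff, Finset.mem_erase, Finset.mem_insert]
    have e1 : Fintype.card ι - (Fintype.card ι - 1 - C.card) - 1 = C.card := by
      omega
    simp only []
    have e2 : Fintype.card ι - C.card - 1 = Fintype.card ι - 1 - C.card := by omega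
    rw [h2, h1, hDcard, e1, e2]
    ring
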